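/- Let A, C ∈ ℂ^{M×N}, and suppose A*C = UΣV*, where U, V ∈ ℂ^{N×N} are unitary and Σ ∈ ℝ^{N×N} is diagonal with nonnegative real entries (a singular value decomposition of A*C). Then B₀ = UV* solves the orthogonal Procrustes problem min over unitary B ∈ ℂ^{N×N} of ‖AB − C‖_F: for every unitary B ∈ ℂ^{N×N}, ‖AB₀ − C‖_F ≤ ‖AB − C‖_F. (This is the key optimization step of the mpEDMD algorithm, applied with A = D^{1/2}Ψ_XG^{-1/2} and C = D^{1/2}Ψ_YG^{-1/2}.) -/

import Mathlib

open scoped Matrix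

attribute [local instance] Matrix.frobeniusNormedAddCommGroup

lemma norm_sq_eq_re_trace {m n : ℕ} (X : Matrix (Fin m) (Fin n) ℂ) :
    ‖X‖ ^ 2 = (Matrix.trace (Xᴴ * X)).re := by
  rw [Matrix.frobenius_norm_def, ← Real.rpow_natCast _ 2, ← Real.rpow_mul
    (by positivity)]
  norm_num
  rw [Matrix.trace, Complex.re_sum]
  simp only [Matrix.diag_apply, Matrix.mul_apply, Matrix.conjTranspose_apply,
    Complex.re_sum]
  rw [Finset.sum_comm]
  congr 1; ext i; congr 1; ext j
  rw [Complex.sq_norm, Complex.normSq_apply]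
  simp [Complex.mul_re]

lemma key_expand {M N : ℕ} (A C : Matrix (Fin M) (Fin N) ℂ)
    (B : Matrix (Fin N) (Fin N) ℂ) (hB : Bᴴ * B = 1) :
    ‖A * B - C‖ ^ 2 = (Matrix.trace (Aᴴ * A)).re + (Matrix.trace (Cᴴ * C)).re
      - 2 * (Matrix.trace (Bᴴ * (Aᴴ * C))).re := by
  have hBB : B * Bᴴ = 1 := mul_eq_one_comm.mp hB
  rw [norm_sq_eq_re_trace]
  have expand : (A * B - C)ᴴ * (A * B - C)
      = (Bᴴ * Aᴴ) * (A * B) - Bᴴ * (Aᴴ * C) - Cᴴ * (A * B) + Cᴴ * C := by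
    simp only [Matrix.conjTranspose_sub, Matrix.conjTranspose_mul,
      Matrix.sub_mul, Matrix.mul_sub, Matrix.mul_assoc]
    abel
  have h1 : Matrix.trace ((Bᴴ * Aᴴ) * (A * B)) = Matrix.trace (Aᴴ * A) := by
    rw [Matrix.trace_mul_comm, Matrix.mul_assoc, ← Matrix.mul_assoc B, hBB,
      Matrix.one_mul, Matrix.trace_mul_comm]
  have h2 : Matrix.trace (Cᴴ * (A * B)) = star (Matrix.trace (Bᴴ * (Aᴴ * C))) := by
    rw [← Matrix.trace_conjTranspose]
    congr 1
    simp [Matrix.conjTranspose_mul, Matrix.mul_assoc]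
  rw [expand, Matrix.trace_add, Matrix.trace_sub, Matrix.trace_sub, h1, h2]
  simp only [Complex.add_re, Complex.sub_re, Complex.star_def, Complex.conj_re]
  ring

/-- The orthogonal Procrustes problem (key optimization step of mpEDMD):
if `A*C = UΣV*` with `U, V` unitary and `Σ` diagonal with nonnegative real entries,
then `B₀ = UV*` minimizes `‖AB − C‖_F` over all unitary `B`. -/
theorem orthogonal_procrustes
    {M N : ℕ} (A C : Matrix (Fin M) (Fin N) ℂ)
    (U V S : Matrix (Fin N) (Fin N) ℂ)
    (hU : Uᴴ * U = 1) (hV : Vᴴ * V = 1)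
    (σ : Fin N → ℝ) (hσ : ∀ i, 0 ≤ σ i)
    (hS : S = Matrix.diagonal fun i => ((σ i : ℝ) : ℂ))
    (hSVD : Aᴴ * C = U * S * Vᴴ) :
    ∀ B : Matrix (Fin N) (Fin N) ℂ, Bᴴ * B = 1 →
      ‖A * (U * Vᴴ) - C‖ ≤ ‖A * B - C‖ := by
  intro B hB
  have hVV : V * Vᴴ = 1 := mul_eq_one_comm.mp hV
  have hB0 : (U * Vᴴ)ᴴ * (U * Vᴴ) = 1 := by
    have e : (U * Vᴴ)ᴴ * (U * Vᴴ) = V * ((Uᴴ * U) * Vᴴ) := by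
      simp [Matrix.conjTranspose_mul, Matrix.mul_assoc]
    rw [e, hU, Matrix.one_mul, hVV]
  -- representation of the cross term
  have hrepr : ∀ B' : Matrix (Fin N) (Fin N) ℂ,
      (Matrix.trace (B'ᴴ * (Aᴴ * C))).re
        = ∑ i, ((Vᴴ * (B'ᴴ * U)) i i).re * σ i := by
    intro B'
    have ht : Matrix.trace (B'ᴴ * (Aᴴ * C))
        = Matrix.trace ((Vᴴ * (B'ᴴ * U)) * S) := by
      rw [hSVD, show B'ᴴ * (U * S * Vᴴ) = (B'ᴴ * (U * S)) * Vᴴ by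
        simp [Matrix.mul_assoc], Matrix.trace_mul_comm]
      simp [Matrix.mul_assoc]
    rw [ht, hS, Matrix.trace]
    simp only [Matrix.diag_apply, Matrix.mul_diagonal, Complex.re_sum]
    congr 1; ext i
    simp [Complex.mul_re]
  -- the bound for an arbitrary unitary matrix
  have bound : ∀ B' : Matrix (Fin N) (Fin N) ℂ, B'ᴴ * B' = 1 →
      (Matrix.trace (B'ᴴ * (Aᴴ * C))).re ≤ ∑ i, σ i := by
    intro B' hB'
    have hBB' : B' * B'ᴴ = 1 := mul_eq_one_comm.mp hB'
    set W : Matrix (Fin N) (Fin N) ℂ := Vᴴ * (B'ᴴ * U) with hWdef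
    have hW : Wᴴ * W = 1 := by
      have e : Wᴴ * W = Uᴴ * (B' * ((V * Vᴴ) * (B'ᴴ * U))) := by
        simp [hWdef, Matrix.conjTranspose_mul, Matrix.mul_assoc]
      rw [e, hVV, one_mul, ← Matrix.mul_assoc B', hBB', one_mul, hU]
    have hcol : ∀ i, ∑ k, Complex.normSq (W k i) = 1 := by
      intro i
      have h1 : (Wᴴ * W) i i = 1 := by rw [hW]; simp
      have h2 : (Wᴴ * W) i i = ∑ k, (Complex.normSq (W k i) : ℂ) := by
        simp [Matrix.mul_apply, Complex.normSq_eq_conj_mul_self]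
      have := h1.symm.trans h2
      have := congrArg Complex.re this
      simpa [Complex.re_sum] using this.symm
    have hre : ∀ i, (W i i).re ≤ 1 := by
      intro i
      have hle : Complex.normSq (W i i) ≤ 1 := by
        rw [← hcol i]
        exact Finset.single_le_sum (f := fun k => Complex.normSq (W k i))
          (fun k _ => Complex.normSq_nonneg _)
          (Finset.mem_univ i)
      have habs : ‖W i i‖ ≤ 1 := by
        nlinarith [Complex.sq_norm (W i i), norm_nonneg (W i i)]
      exact (Complex.re_le_norm _).trans habs
    rw [hrepr B']
    apply Finset.sum_le_sum
    intro i _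
    calc ((Vᴴ * (B'ᴴ * U)) i i).re * σ i ≤ 1 * σ i :=
          mul_le_mul_of_nonneg_right (hre i) (hσ i)
      _ = σ i := one_mul _
  -- equality for B₀ = U * Vᴴ
  have eq0 : (Matrix.trace ((U * Vᴴ)ᴴ * (Aᴴ * C))).re = ∑ i, σ i := by
    rw [hrepr]
    have hW0 : Vᴴ * ((U * Vᴴ)ᴴ * U) = 1 := by
      have : Vᴴ * ((U * Vᴴ)ᴴ * U) = Vᴴ * (V * (Uᴴ * U)) := by
        simp [Matrix.conjTranspose_mul, Matrix.mul_assoc]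
      rw [this, hU, Matrix.mul_one, hV]
    rw [hW0]
    congr 1; ext i
    simp [Matrix.one_apply]
  have hsq : ‖A * (U * Vᴴ) - C‖ ^ 2 ≤ ‖A * B - C‖ ^ 2 := by
    rw [key_expand A C _ hB0, key_expand A C B hB]
    have := bound B hB
    linarith [eq0, this]
  nlinarith [norm_nonneg (A * (U * Vᴴ) - C), norm_nonneg (A * B - C), hsq]
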